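/- Let W ∈ ℤ^{n×(n+2)} be a matrix of full rank n whose last column is zero, let C ∈ ℝ^{n×(n+2)} have full rank n, and consider the system C·x^W = 0 in variables x ∈ ℝ_{>0}^n, where x^W denotes the column vector of monomials (x^{w^{(1)}}, ..., x^{w^{(n+1)}}, 1). Let Q ∈ ℤ^{(n+2)×2} be a Gale dual of W with last column (0,...,0,1)ᵀ, and D ∈ ℝ^{(n+2)×2} a Gale dual of C with last row (0,1). Then the map x ↦ y determined by x^W = D·(y,1)ᵀ is a bijection between { x ∈ ℝ_{>0}^n : C·x^W = 0 } and { y ∈ ℝ : ∏_{i=1}^{n+1} d_i(y)^{q_{i,1}} = 1 and d_i(y) > 0 for all i }, where d_i(y) = d_{i,1}·y + d_{i,2} is the i-th entry of D·(y,1)ᵀ. -/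

import Mathlib

theorem stmt19 (n : ℕ)
    (W : Matrix (Fin n) (Fin (n + 2)) ℤ)
    (Cm : Matrix (Fin n) (Fin (n + 2)) ℝ)
    (hWlast : ∀ i, W i (Fin.last (n + 1)) = 0)
    (hWrank : LinearIndependent ℝ (fun i : Fin n => fun j : Fin (n + 2) => (W i j : ℝ)))
    (hCrank : LinearIndependent ℝ (fun i : Fin n => fun j : Fin (n + 2) => Cm i j))
    (Q : Matrix (Fin (n + 2)) (Fin 2) ℤ)
    (hQker : ∀ v : Fin (n + 2) → ℤ, W.mulVec v = 0 ↔ ∃ t : Fin 2 → ℤ, v = Q.mulVec t)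
    (hQinj : ∀ t : Fin 2 → ℤ, Q.mulVec t = 0 → t = 0)
    (hQlast : ∀ i : Fin (n + 2), Q i 1 = if i = Fin.last (n + 1) then 1 else 0)
    (D : Matrix (Fin (n + 2)) (Fin 2) ℝ)
    (hDker : ∀ v : Fin (n + 2) → ℝ, Cm.mulVec v = 0 ↔ ∃ t : Fin 2 → ℝ, v = D.mulVec t)
    (hDinj : ∀ t : Fin 2 → ℝ, D.mulVec t = 0 → t = 0)
    (hDlast0 : D (Fin.last (n + 1)) 0 = 0) (hDlast1 : D (Fin.last (n + 1)) 1 = 1) :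
    ∃ e : {x : Fin n → ℝ // (∀ i, 0 < x i) ∧
            Cm.mulVec (fun j => ∏ i, x i ^ (W i j)) = 0} ≃
          {y : ℝ // (∀ i : Fin (n + 2), 0 < D i 0 * y + D i 1) ∧
            ∏ i ∈ Finset.univ.filter (fun i : Fin (n + 2) => (i : ℕ) < n + 1),
              (D i 0 * y + D i 1) ^ (Q i 0) = 1},
      ∀ x, (fun j => ∏ i, x.1 i ^ (W i j)) = D.mulVec ![(e x).1, 1] := by
  classical
  set Wr : Matrix (Fin n) (Fin (n + 2)) ℝ := fun i j => (W i j : ℝ) with hWrdef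
  set Qr : Matrix (Fin (n + 2)) (Fin 2) ℝ := fun j k => (Q j k : ℝ) with hQrdef
  -- zpow via exp/log
  have hzpow : ∀ (a : ℝ), 0 < a → ∀ m : ℤ, a ^ m = Real.exp (m * Real.log a) := by
    intro a ha m
    rw [← Real.rpow_intCast, Real.rpow_def_of_pos ha, mul_comm]
  have hmono : ∀ (x : Fin n → ℝ), (∀ i, 0 < x i) → ∀ j,
      ∏ i, x i ^ (W i j) = Real.exp (∑ i, (W i j : ℝ) * Real.log (x i)) := by
    intro x hx j
    rw [Real.exp_sum]
    exact Finset.prod_congr rfl fun i _ => hzpow _ (hx i) _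
  -- W * Q = 0 (over ℝ)
  have hWQ : ∀ i k, ∑ j, (W i j : ℝ) * (Q j k : ℝ) = 0 := by
    intro i k
    have h1 : W.mulVec (Q.mulVec (Pi.single k 1)) = 0 := (hQker _).mpr ⟨_, rfl⟩
    rw [Matrix.mulVec_single] at h1
    have h2 : W.mulVec (fun j => Q j k) = 0 := by simp at h1; exact h1
    have h3 : ∑ j, W i j * Q j k = 0 := by
      have := congrFun h2 i
      simpa [Matrix.mulVec, dotProduct] using this
    calc ∑ j, (W i j : ℝ) * (Q j k : ℝ) = ((∑ j, W i j * Q j k : ℤ) : ℝ) := by push_cast; ring_nf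
    _ = 0 := by rw [h3]; simp
  have hswap : ∀ (v : Fin n → ℝ) (k : Fin 2),
      ∑ j, (Q j k : ℝ) * ∑ i, (W i j : ℝ) * v i = 0 := by
    intro v k
    calc ∑ j, (Q j k : ℝ) * ∑ i, (W i j : ℝ) * v i
        = ∑ j, ∑ i, (W i j : ℝ) * (Q j k : ℝ) * v i := by
          refine Finset.sum_congr rfl fun j _ => ?_
          rw [Finset.mul_sum]
          exact Finset.sum_congr rfl fun i _ => by ring
      _ = ∑ i, ∑ j, (W i j : ℝ) * (Q j k : ℝ) * v i := Finset.sum_comm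
      _ = ∑ i, (∑ j, (W i j : ℝ) * (Q j k : ℝ)) * v i := by
          refine Finset.sum_congr rfl fun i _ => ?_
          rw [Finset.sum_mul]
      _ = 0 := by simp [hWQ]
  -- the linear maps
  set T : (Fin n → ℝ) →ₗ[ℝ] (Fin (n + 2) → ℝ) := Wr.transpose.mulVecLin with hTdef
  set g : (Fin (n + 2) → ℝ) →ₗ[ℝ] (Fin 2 → ℝ) := Qr.transpose.mulVecLin with hgdef
  have hT : ∀ u j, T u j = ∑ i, (W i j : ℝ) * u i := by
    intro u j
    simp [hTdef, Matrix.mulVecLin_apply, Matrix.mulVec, dotProduct, hWrdef,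
      Matrix.vecMul, mul_comm, Matrix.transpose]
  have hg : ∀ L k, g L k = ∑ j, (Q j k : ℝ) * L j := by
    intro L k
    simp [hgdef, Matrix.mulVecLin_apply, Matrix.mulVec, dotProduct, hQrdef,
      Matrix.vecMul, mul_comm, Matrix.transpose]
  have hTinj : Function.Injective T := by
    intro a b hab
    have hli := Fintype.linearIndependent_iff.mp hWrank
    have hTz : T (a - b) = 0 := by rw [map_sub, hab, sub_self]
    have h0 : ∑ i, (a - b) i • (fun j : Fin (n + 2) => (W i j : ℝ)) = 0 := by
      funext j
      have := congrFun hTz j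
      rw [hT] at this
      simpa [Finset.sum_apply, mul_comm] using this
    have := hli _ h0
    funext i
    have hi := this i
    have : a i - b i = 0 := by simpa using hi
    linarith
  have hcomp : g ∘ₗ T = 0 := by
    have hWQmat : Wr * Qr = 0 := by
      ext i k
      rw [Matrix.mul_apply]; exact hWQ i k
    have hQW : Qr.transpose * Wr.transpose = 0 := by
      rw [← Matrix.transpose_mul, hWQmat, Matrix.transpose_zero]
    rw [hTdef, hgdef, ← Matrix.mulVecLin_mul, hQW, Matrix.mulVecLin_zero]
  have hle : LinearMap.range T ≤ LinearMap.ker g := LinearMap.range_le_ker_iff.mpr hcomp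
  -- existence of j0 with Q j0 0 ≠ 0
  have hj0 : ∃ j0, j0 ≠ Fin.last (n + 1) ∧ Q j0 0 ≠ 0 := by
    by_contra hc
    push_neg at hc
    have h0 : Q.mulVec ![1, -(Q (Fin.last (n + 1)) 0)] = 0 := by
      funext i
      by_cases hi : i = Fin.last (n + 1)
      · subst hi
        simp [Matrix.mulVec, dotProduct, Fin.sum_univ_two, hQlast]
      · simp [Matrix.mulVec, dotProduct, Fin.sum_univ_two, hQlast i, hi, hc i hi]
    have ht := hQinj _ h0
    have : (1 : ℤ) = 0 := by simpa using congrFun ht 0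
    exact one_ne_zero this
  have hgsurj : Function.Surjective g := by
    obtain ⟨j0, hj0ne, hj0Q⟩ := hj0
    have hQj0 : ((Q j0 0 : ℝ)) ≠ 0 := Int.cast_ne_zero.mpr hj0Q
    intro c
    refine ⟨Pi.single j0 ((c 0 - (Q (Fin.last (n + 1)) 0 : ℝ) * c 1) / (Q j0 0 : ℝ))
      + Pi.single (Fin.last (n + 1)) (c 1), ?_⟩
    rw [map_add]
    have hs1 : ∀ (j : Fin (n + 2)) (v : ℝ) (k : Fin 2),
        g (Pi.single j v) k = (Q j k : ℝ) * v := by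
      intro j v k
      rw [hgdef]
      simp [Matrix.mulVecLin_apply, Matrix.mulVec_single, hQrdef, mul_comm, Matrix.transpose]
    funext k
    rw [Pi.add_apply, hs1, hs1]
    fin_cases k
    · show (Q j0 0 : ℝ) * _ + (Q (Fin.last (n + 1)) 0 : ℝ) * c 1 = c 0
      field_simp
      ring
    · show (Q j0 1 : ℝ) * _ + (Q (Fin.last (n + 1)) 1 : ℝ) * c 1 = c 1
      rw [hQlast j0, hQlast (Fin.last (n + 1))]
      simp [hj0ne]
  have hkerfin : Module.finrank ℝ (LinearMap.ker g) = n := by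
    have h := LinearMap.finrank_range_add_finrank_ker g
    rw [LinearMap.range_eq_top.mpr hgsurj, finrank_top] at h
    simp only [Module.finrank_pi, Fintype.card_fin] at h
    omega
  have hrange : LinearMap.range T = LinearMap.ker g := by
    apply Submodule.eq_of_le_of_finrank_le hle
    rw [hkerfin, LinearMap.finrank_range_of_inj hTinj, Module.finrank_pi]
    simp
  -- helper facts
  have mulvec2 : ∀ (y : ℝ) (i : Fin (n + 2)), D.mulVec ![y, 1] i = D i 0 * y + D i 1 := by
    intro y i
    simp [Matrix.mulVec, dotProduct, Fin.sum_univ_two]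
  have hfilter : Finset.univ.filter (fun i : Fin (n + 2) => (i : ℕ) < n + 1)
      = Finset.univ.erase (Fin.last (n + 1)) := by
    ext i
    simp only [Finset.mem_filter, Finset.mem_univ, true_and, Finset.mem_erase, and_true]
    constructor
    · intro h heq
      rw [heq, Fin.val_last] at h
      exact lt_irrefl _ h
    · exact fun h => Fin.val_lt_last h
  have hzlast : ∀ x : Fin n → ℝ, ∏ i, x i ^ W i (Fin.last (n + 1)) = 1 := by
    intro x; simp [hWlast]
  have hyinj : ∀ y y' : ℝ, D.mulVec ![y, 1] = D.mulVec ![y', 1] → y = y' := by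
    intro y y' h
    have h0 : D.mulVec (![y, 1] - ![y', 1]) = 0 := by rw [Matrix.mulVec_sub, h, sub_self]
    have ht := hDinj _ h0
    have := congrFun ht 0
    simp at this
    linarith
  have hxinj : ∀ (x x' : Fin n → ℝ), (∀ i, 0 < x i) → (∀ i, 0 < x' i) →
      (fun j => ∏ i, x i ^ W i j) = (fun j => ∏ i, x' i ^ W i j) → x = x' := by
    intro x x' hx hx' h
    have hL : T (fun i => Real.log (x i)) = T (fun i => Real.log (x' i)) := by
      funext j
      have hj := congrFun h j
      rw [hmono x hx j, hmono x' hx' j] at hj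
      rw [hT, hT]
      exact Real.exp_eq_exp.mp hj
    have hlog := hTinj hL
    funext i
    have hlogi := congrFun hlog i
    calc x i = Real.exp (Real.log (x i)) := (Real.exp_log (hx i)).symm
      _ = Real.exp (Real.log (x' i)) := by rw [hlogi]
      _ = x' i := Real.exp_log (hx' i)
  have hprodU : ∀ (x : Fin n → ℝ), (∀ i, 0 < x i) →
      ∏ j, (∏ i, x i ^ W i j) ^ Q j 0 = 1 := by
    intro x hx
    have hterm : ∀ j, (∏ i, x i ^ W i j) ^ Q j 0
        = Real.exp ((Q j 0 : ℝ) * ∑ i, (W i j : ℝ) * Real.log (x i)) := by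
      intro j
      rw [hmono x hx j, hzpow _ (Real.exp_pos _), Real.log_exp]
    rw [Finset.prod_congr rfl (fun j _ => hterm j), ← Real.exp_sum, hswap, Real.exp_zero]
  -- forward direction
  have hfwd : ∀ (x : Fin n → ℝ), (∀ i, 0 < x i) →
      Cm.mulVec (fun j => ∏ i, x i ^ W i j) = 0 →
      ∃ y : ℝ, ((∀ i : Fin (n + 2), 0 < D i 0 * y + D i 1) ∧
          ∏ i ∈ Finset.univ.filter (fun i : Fin (n + 2) => (i : ℕ) < n + 1),
            (D i 0 * y + D i 1) ^ (Q i 0) = 1) ∧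
        (fun j => ∏ i, x i ^ W i j) = D.mulVec ![y, 1] := by
    intro x hx hC
    obtain ⟨t, ht⟩ := (hDker _).mp hC
    have ht1 : t 1 = 1 := by
      have hl := congrFun ht (Fin.last (n + 1))
      rw [hzlast x] at hl
      rw [Matrix.mulVec] at hl
      simp [dotProduct, Fin.sum_univ_two, hDlast0, hDlast1] at hl
      linarith
    have hteq : t = ![t 0, 1] := by
      funext k
      fin_cases k <;> simp [ht1]
    have heq : (fun j => ∏ i, x i ^ W i j) = D.mulVec ![t 0, 1] := by
      rw [← hteq]; exact ht
    have hfac : ∀ i, D i 0 * t 0 + D i 1 = ∏ i', x i' ^ W i' i := by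
      intro i
      rw [← mulvec2, ← heq]
    refine ⟨t 0, ⟨?_, ?_⟩, heq⟩
    · intro i
      rw [hfac i]
      exact Finset.prod_pos fun i' _ => zpow_pos (hx i') _
    · have hU := hprodU x hx
      rw [← Finset.prod_erase_mul _ _ (Finset.mem_univ (Fin.last (n + 1))), hzlast x,
        one_zpow, mul_one] at hU
      rw [hfilter]
      calc ∏ i ∈ Finset.univ.erase (Fin.last (n + 1)), (D i 0 * t 0 + D i 1) ^ Q i 0
          = ∏ i ∈ Finset.univ.erase (Fin.last (n + 1)), (∏ i', x i' ^ W i' i) ^ Q i 0 :=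
            Finset.prod_congr rfl fun i _ => by rw [hfac i]
        _ = 1 := hU
  -- backward direction
  have hbwd : ∀ y : ℝ, (∀ i : Fin (n + 2), 0 < D i 0 * y + D i 1) →
      (∏ i ∈ Finset.univ.filter (fun i : Fin (n + 2) => (i : ℕ) < n + 1),
        (D i 0 * y + D i 1) ^ (Q i 0) = 1) →
      ∃ x : Fin n → ℝ, (∀ i, 0 < x i) ∧
        (fun j => ∏ i, x i ^ W i j) = D.mulVec ![y, 1] := by
    intro y hypos hyprod
    set z : Fin (n + 2) → ℝ := fun i => D i 0 * y + D i 1 with hzdef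
    have hzlast1 : z (Fin.last (n + 1)) = 1 := by
      simp [hzdef, hDlast0, hDlast1]
    have hLker : (fun j => Real.log (z j)) ∈ LinearMap.ker g := by
      rw [LinearMap.mem_ker]
      funext k
      rw [hg]
      fin_cases k
      · show ∑ j, (Q j 0 : ℝ) * Real.log (z j) = 0
        rw [← Finset.sum_erase_add _ _ (Finset.mem_univ (Fin.last (n + 1))),
          hzlast1, Real.log_one, mul_zero, add_zero]
        have hls : ∑ j ∈ Finset.univ.erase (Fin.last (n + 1)), (Q j 0 : ℝ) * Real.log (z j)
            = Real.log (∏ j ∈ Finset.univ.erase (Fin.last (n + 1)), z j ^ Q j 0) := by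
          rw [Real.log_prod (fun j _ => zpow_ne_zero _ (ne_of_gt (hypos j)))]
          exact Finset.sum_congr rfl fun j _ => (Real.log_zpow _ _).symm
        rw [hls, ← hfilter]
        rw [show (∏ j ∈ Finset.univ.filter (fun i : Fin (n + 2) => (i : ℕ) < n + 1),
          z j ^ Q j 0) = 1 from hyprod, Real.log_one]
      · show ∑ j, (Q j 1 : ℝ) * Real.log (z j) = 0
        have : ∀ j, (Q j 1 : ℝ) * Real.log (z j)
            = if j = Fin.last (n + 1) then Real.log (z j) else 0 := by
          intro j
          rw [hQlast j]
          by_cases hj : j = Fin.last (n + 1) <;> simp [hj]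
        rw [Finset.sum_congr rfl fun j _ => this j, Finset.sum_ite_eq' Finset.univ]
        simp [hzlast1]
    have hmem : (fun j => Real.log (z j)) ∈ LinearMap.range T := by
      rw [hrange]; exact hLker
    obtain ⟨u, hu⟩ := hmem
    refine ⟨fun i => Real.exp (u i), fun i => Real.exp_pos _, ?_⟩
    funext j
    show ∏ i, Real.exp (u i) ^ W i j = D.mulVec ![y, 1] j
    rw [hmono _ (fun i => Real.exp_pos _) j]
    simp_rw [Real.log_exp]
    have huj := congrFun hu j
    rw [hT] at huj
    rw [huj, Real.exp_log (hypos j), mulvec2]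
  -- assemble the equivalence
  have hXset : ∀ y : ℝ, Cm.mulVec (D.mulVec ![y, 1]) = 0 := fun y => (hDker _).mpr ⟨_, rfl⟩
  set X := {x : Fin n → ℝ // (∀ i, 0 < x i) ∧
    Cm.mulVec (fun j => ∏ i, x i ^ (W i j)) = 0} with hXdef
  set Y := {y : ℝ // (∀ i : Fin (n + 2), 0 < D i 0 * y + D i 1) ∧
    ∏ i ∈ Finset.univ.filter (fun i : Fin (n + 2) => (i : ℕ) < n + 1),
      (D i 0 * y + D i 1) ^ (Q i 0) = 1} with hYdef
  let f : X → Y := fun x => ⟨(hfwd x.1 x.2.1 x.2.2).choose, (hfwd x.1 x.2.1 x.2.2).choose_spec.1⟩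
  have hf : ∀ x : X, (fun j => ∏ i, x.1 i ^ W i j) = D.mulVec ![(f x).1, 1] :=
    fun x => (hfwd x.1 x.2.1 x.2.2).choose_spec.2
  have hfinj : Function.Injective f := by
    intro a b hab
    apply Subtype.ext
    apply hxinj _ _ a.2.1 b.2.1
    rw [hf a, hf b]
    have : (f a).1 = (f b).1 := by rw [hab]
    rw [this]
  have hfsurj : Function.Surjective f := by
    rintro ⟨y, hy1, hy2⟩
    obtain ⟨x, hxpos, hxeq⟩ := hbwd y hy1 hy2
    have hxC : Cm.mulVec (fun j => ∏ i, x i ^ W i j) = 0 := by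
      rw [hxeq]; exact hXset y
    refine ⟨⟨x, hxpos, hxC⟩, ?_⟩
    apply Subtype.ext
    apply hyinj
    rw [← hf ⟨x, hxpos, hxC⟩]
    exact hxeq
  exact ⟨Equiv.ofBijective f ⟨hfinj, hfsurj⟩, hf⟩
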